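/- Let Σ_1, Σ_2 be r×r positive definite matrices and let d_1,…,d_r be the eigenvalues of Σ_2^{1/2} Σ_1^{-1} Σ_2^{1/2}. Then: (i) ρ_max(Σ_2)^{-2} ‖Σ_1 − Σ_2‖_F² ≤ Σ_{k=1}^r (d_k^{-1} − 1)² ≤ ρ_min(Σ_2)^{-2} ‖Σ_1 − Σ_2‖_F²; and (ii) for every ε > 0 there exists δ > 0, not depending on r, Σ_1, Σ_2, such that g²(Σ_1,Σ_2) < δ implies max_{1≤k≤r} |d_k − 1| < ε. -/

import Mathlib

open Matrix
open scoped BigOperators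

noncomputable section

open scoped MatrixOrder Matrix.Norms.L2Operator

/-- squared Frobenius norm -/
def frobSq {r : ℕ} (A : Matrix (Fin r) (Fin r) ℝ) : ℝ := ∑ i, ∑ j, A i j ^ 2

/-- the set of eigenvalues of a matrix -/
def eigSet {r : ℕ} (A : Matrix (Fin r) (Fin r) ℝ) : Set ℝ :=
  {μ | ∃ v : Fin r → ℝ, v ≠ 0 ∧ A *ᵥ v = μ • v}

/-- smallest eigenvalue -/
def rhoMin {r : ℕ} (A : Matrix (Fin r) (Fin r) ℝ) : ℝ := sInf (eigSet A)

/-- largest eigenvalue -/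
def rhoMax {r : ℕ} (A : Matrix (Fin r) (Fin r) ℝ) : ℝ := sSup (eigSet A)

/-- `g²(Σ₁,Σ₂) = 1 − det(Σ₁)^{1/4} det(Σ₂)^{1/4} / det((Σ₁+Σ₂)/2)^{1/2}` -/
def gsq {r : ℕ} (S1 S2 : Matrix (Fin r) (Fin r) ℝ) : ℝ :=
  1 - S1.det ^ ((1 : ℝ) / 4) * S2.det ^ ((1 : ℝ) / 4) /
    (((1 : ℝ) / 2) • (S1 + S2)).det ^ ((1 : ℝ) / 2)


variable {n : ℕ}

-- unitary facts
lemma umul (U : Matrix.unitaryGroup (Fin n) ℝ) : (U : Matrix (Fin n) (Fin n) ℝ) * star (U : Matrix (Fin n) (Fin n) ℝ) = 1 :=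
  Matrix.mem_unitaryGroup_iff.mp U.2

lemma umul' (U : Matrix.unitaryGroup (Fin n) ℝ) : star (U : Matrix (Fin n) (Fin n) ℝ) * (U : Matrix (Fin n) (Fin n) ℝ) = 1 :=
  Matrix.mem_unitaryGroup_iff'.mp U.2

/-- conjugation by unitary -/
def conjU (U : Matrix.unitaryGroup (Fin n) ℝ) (C : Matrix (Fin n) (Fin n) ℝ) :
    Matrix (Fin n) (Fin n) ℝ := (U : Matrix (Fin n) (Fin n) ℝ) * C * star (U : Matrix (Fin n) (Fin n) ℝ)

lemma conjU_mul (U : Matrix.unitaryGroup (Fin n) ℝ) (C D : Matrix (Fin n) (Fin n) ℝ) :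
    conjU U C * conjU U D = conjU U (C * D) := by
  simp only [conjU, Matrix.mul_assoc]
  rw [← Matrix.mul_assoc (star _) (U : Matrix (Fin n) (Fin n) ℝ), umul', Matrix.one_mul]

lemma conjU_add (U : Matrix.unitaryGroup (Fin n) ℝ) (C D : Matrix (Fin n) (Fin n) ℝ) :
    conjU U C + conjU U D = conjU U (C + D) := by
  simp [conjU, Matrix.add_mul, Matrix.mul_add]

lemma conjU_sub (U : Matrix.unitaryGroup (Fin n) ℝ) (C D : Matrix (Fin n) (Fin n) ℝ) :
    conjU U C - conjU U D = conjU U (C - D) := by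
  simp [conjU, Matrix.sub_mul, Matrix.mul_sub]

lemma conjU_one (U : Matrix.unitaryGroup (Fin n) ℝ) : conjU U 1 = 1 := by
  simp [conjU, umul]

lemma conjU_det (U : Matrix.unitaryGroup (Fin n) ℝ) (C : Matrix (Fin n) (Fin n) ℝ) :
    (conjU U C).det = C.det := by
  have h1 : ((U : Matrix (Fin n) (Fin n) ℝ) * star (U : Matrix (Fin n) (Fin n) ℝ)).det = 1 := by
    rw [umul, Matrix.det_one]
  rw [conjU, Matrix.det_mul, Matrix.det_mul]
  rw [Matrix.det_mul] at h1
  calc (↑U : Matrix (Fin n) (Fin n) ℝ).det * C.det * (star ↑U : Matrix (Fin n) (Fin n) ℝ).det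
      = C.det * ((↑U : Matrix (Fin n) (Fin n) ℝ).det * (star ↑U : Matrix (Fin n) (Fin n) ℝ).det) := by ring
    _ = C.det := by rw [h1, mul_one]

lemma conjU_trace (U : Matrix.unitaryGroup (Fin n) ℝ) (C : Matrix (Fin n) (Fin n) ℝ) :
    (conjU U C).trace = C.trace := by
  rw [conjU, Matrix.trace_mul_comm, ← Matrix.mul_assoc, umul', Matrix.one_mul]

lemma conjU_inv (U : Matrix.unitaryGroup (Fin n) ℝ) (f : Fin n → ℝ) (hf : ∀ i, f i ≠ 0) :
    (conjU U (Matrix.diagonal f))⁻¹ = conjU U (Matrix.diagonal fun i => (f i)⁻¹) := by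
  apply Matrix.inv_eq_right_inv
  rw [conjU_mul, Matrix.diagonal_mul_diagonal]
  have : (fun i => f i * (f i)⁻¹) = fun _ => (1:ℝ) := by
    funext i; exact mul_inv_cancel₀ (hf i)
  rw [this, Matrix.diagonal_one, conjU_one]

/-- spectral theorem restated -/
lemma spectral (A : Matrix (Fin n) (Fin n) ℝ) (hA : A.IsHermitian) :
    A = conjU hA.eigenvectorUnitary (Matrix.diagonal hA.eigenvalues) := by
  have := hA.spectral_theorem
  simpa [conjU, RCLike.ofReal_real_eq_id] using this


lemma eigSet_eq (A : Matrix (Fin n) (Fin n) ℝ) (hA : A.IsHermitian) :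
    eigSet A = Set.range hA.eigenvalues := by
  ext μ
  constructor
  · rintro ⟨v, hv, hAv⟩
    by_contra hμ
    rw [Set.mem_range] at hμ
    have hne : ∀ i, hA.eigenvalues i ≠ μ := by
      intro i h
      exact hμ ⟨i, h⟩
    -- A - μ • 1 = conjU (diagonal (e - μ))
    have hconj : A - μ • (1 : Matrix (Fin n) (Fin n) ℝ) =
        conjU hA.eigenvectorUnitary (Matrix.diagonal fun i => hA.eigenvalues i - μ) := by
      have h1 : (μ • (1 : Matrix (Fin n) (Fin n) ℝ)) = conjU hA.eigenvectorUnitary (μ • 1) := by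
        rw [conjU]
        simp only [Matrix.mul_smul, Matrix.smul_mul, Matrix.mul_one]
        rw [umul]
      calc A - μ • (1 : Matrix (Fin n) (Fin n) ℝ)
          = conjU hA.eigenvectorUnitary (Matrix.diagonal hA.eigenvalues) -
            conjU hA.eigenvectorUnitary (μ • 1) := by rw [← spectral A hA, ← h1]
        _ = conjU hA.eigenvectorUnitary (Matrix.diagonal hA.eigenvalues - μ • 1) := by
            simp [conjU, Matrix.mul_sub, Matrix.sub_mul]
        _ = _ := by
            rw [Matrix.smul_one_eq_diagonal, Matrix.diagonal_sub]
    have hdet : (A - μ • (1 : Matrix (Fin n) (Fin n) ℝ)).det = ∏ i, (hA.eigenvalues i - μ) := by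
      rw [hconj, conjU_det, Matrix.det_diagonal]
    have hunit : IsUnit (A - μ • (1 : Matrix (Fin n) (Fin n) ℝ)) := by
      rw [Matrix.isUnit_iff_isUnit_det, hdet, isUnit_iff_ne_zero]
      exact Finset.prod_ne_zero_iff.mpr fun i _ => sub_ne_zero_of_ne (hne i)
    have hinj := Matrix.mulVec_injective_iff_isUnit.mpr hunit
    apply hv
    apply hinj
    rw [Matrix.sub_mulVec, hAv, Matrix.smul_mulVec, Matrix.one_mulVec, sub_self,
      Matrix.mulVec_zero]
  · rintro ⟨i, rfl⟩
    refine ⟨hA.eigenvectorBasis i, ?_, hA.mulVec_eigenvectorBasis i⟩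
    have := hA.eigenvectorBasis.orthonormal.ne_zero i
    intro h
    apply this
    ext j
    exact congrFun h j


lemma frobSq_transpose (A : Matrix (Fin n) (Fin n) ℝ) : frobSq Aᵀ = frobSq A := by
  rw [frobSq, frobSq, Finset.sum_comm]
  simp [Matrix.transpose_apply]

lemma frobSq_eq_trace (A : Matrix (Fin n) (Fin n) ℝ) : frobSq A = (Aᵀ * A).trace := by
  rw [frobSq, Matrix.trace, Finset.sum_comm]
  apply Finset.sum_congr rfl
  intro j _
  rw [Matrix.diag_apply, Matrix.mul_apply]
  apply Finset.sum_congr rfl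
  intro i _
  rw [Matrix.transpose_apply]
  ring

lemma star_coe_transpose (U : Matrix.unitaryGroup (Fin n) ℝ) :
    star (U : Matrix (Fin n) (Fin n) ℝ) = (U : Matrix (Fin n) (Fin n) ℝ)ᵀ := by
  rw [Matrix.star_eq_conjTranspose]
  ext i j
  simp [Matrix.conjTranspose_apply]

lemma dot_conj (U : Matrix.unitaryGroup (Fin n) ℝ) (v y : Fin n → ℝ) :
    v ⬝ᵥ ((U : Matrix (Fin n) (Fin n) ℝ) *ᵥ y) = (star (U : Matrix (Fin n) (Fin n) ℝ) *ᵥ v) ⬝ᵥ y := by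
  rw [Matrix.dotProduct_mulVec, star_coe_transpose, Matrix.mulVec_transpose]

lemma quad_bounds (U : Matrix.unitaryGroup (Fin n) ℝ) (f : Fin n → ℝ) {a b : ℝ}
    (hf : ∀ i, a ≤ f i ∧ f i ≤ b) (v : Fin n → ℝ) :
    a * (v ⬝ᵥ v) ≤ v ⬝ᵥ (conjU U (Matrix.diagonal f) *ᵥ v) ∧
      v ⬝ᵥ (conjU U (Matrix.diagonal f) *ᵥ v) ≤ b * (v ⬝ᵥ v) := by
  set w := star (U : Matrix (Fin n) (Fin n) ℝ) *ᵥ v with hw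
  have hmid : v ⬝ᵥ (conjU U (Matrix.diagonal f) *ᵥ v) = ∑ i, f i * w i ^ 2 := by
    rw [conjU, ← Matrix.mulVec_mulVec, ← Matrix.mulVec_mulVec, dot_conj, ← hw]
    rw [dotProduct, Finset.sum_congr rfl]
    intro i _
    rw [Matrix.mulVec_diagonal]
    ring
  have hww : w ⬝ᵥ w = v ⬝ᵥ v := by
    have : v ⬝ᵥ ((U : Matrix (Fin n) (Fin n) ℝ) *ᵥ w) = w ⬝ᵥ w := dot_conj U v w
    rw [hw, Matrix.mulVec_mulVec, umul, Matrix.one_mulVec] at this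
    exact this.symm
  have hww' : w ⬝ᵥ w = ∑ i, w i ^ 2 := by
    rw [dotProduct]; apply Finset.sum_congr rfl; intro i _; ring
  constructor
  · rw [hmid, ← hww, hww', Finset.mul_sum]
    apply Finset.sum_le_sum
    intro i _
    exact mul_le_mul_of_nonneg_right (hf i).1 (sq_nonneg _)
  · rw [hmid, ← hww, hww', Finset.mul_sum]
    apply Finset.sum_le_sum
    intro i _
    exact mul_le_mul_of_nonneg_right (hf i).2 (sq_nonneg _)

lemma trace_conj_quad (P : Matrix (Fin n) (Fin n) ℝ) (X : Matrix (Fin n) (Fin n) ℝ) :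
    (Xᵀ * P * X).trace = ∑ j, (fun i => X i j) ⬝ᵥ (P *ᵥ fun i => X i j) := by
  rw [Matrix.trace]
  apply Finset.sum_congr rfl
  intro j _
  simp only [Matrix.diag_apply, Matrix.mul_apply, Matrix.transpose_apply, dotProduct,
    Matrix.mulVec, Finset.sum_mul, Finset.mul_sum]
  rw [Finset.sum_comm]
  exact Finset.sum_congr rfl fun x _ => Finset.sum_congr rfl fun y _ => by ring

lemma frobSq_col (X : Matrix (Fin n) (Fin n) ℝ) :
    frobSq X = ∑ j, (fun i => X i j) ⬝ᵥ (fun i => X i j) := by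
  rw [frobSq, Finset.sum_comm]
  apply Finset.sum_congr rfl
  intro j _
  rw [dotProduct]
  apply Finset.sum_congr rfl
  intro i _
  ring

lemma conjT_eq_T (A : Matrix (Fin n) (Fin n) ℝ) : Aᴴ = Aᵀ := by
  ext i j
  simp [Matrix.conjTranspose_apply]

lemma conj_frob_bound {P : Matrix (Fin n) (Fin n) ℝ} {a b : ℝ}
    (hquad : ∀ v : Fin n → ℝ, a * (v ⬝ᵥ v) ≤ v ⬝ᵥ (P *ᵥ v) ∧ v ⬝ᵥ (P *ᵥ v) ≤ b * (v ⬝ᵥ v))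
    (X : Matrix (Fin n) (Fin n) ℝ) :
    a * frobSq X ≤ (Xᵀ * P * X).trace ∧ (Xᵀ * P * X).trace ≤ b * frobSq X := by
  rw [trace_conj_quad, frobSq_col, Finset.mul_sum, Finset.mul_sum]
  exact ⟨Finset.sum_le_sum fun j _ => (hquad _).1, Finset.sum_le_sum fun j _ => (hquad _).2⟩

lemma posdef_conj {A B : Matrix (Fin n) (Fin n) ℝ} (hA : A.PosDef) (hB : IsUnit B.det)
    (hBT : Bᵀ = B) : (B * A * B).PosDef := by
  refine Matrix.PosDef.of_dotProduct_mulVec_pos ?_ ?_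
  · have := (hA.posSemidef.mul_mul_conjTranspose_same B).1
    rwa [conjT_eq_T, hBT] at this
  · intro x hx
    have hBx : B *ᵥ x ≠ 0 := by
      have hinj := Matrix.mulVec_injective_iff_isUnit.mpr ((Matrix.isUnit_iff_isUnit_det B).mpr hB)
      intro h
      exact hx (hinj (by rw [h, Matrix.mulVec_zero]))
    have := hA.dotProduct_mulVec_pos hBx
    have hrw : star x ⬝ᵥ ((B * A * B) *ᵥ x) = star (B *ᵥ x) ⬝ᵥ (A *ᵥ (B *ᵥ x)) := by
      have h1 : (B * A * B) *ᵥ x = B *ᵥ (A *ᵥ (B *ᵥ x)) := by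
        rw [Matrix.mulVec_mulVec, Matrix.mulVec_mulVec]
      rw [h1]
      have h2 : ∀ y : Fin n → ℝ, star y = y := fun y => funext fun i => star_trivial _
      rw [h2, h2, Matrix.dotProduct_mulVec, ← Matrix.mulVec_transpose, hBT]
    rw [hrw]
    exact this


lemma sqrt_det_unit {S : Matrix (Fin n) (Fin n) ℝ} (hS : S.PosDef) :
    IsUnit (CFC.sqrt S).det := by
  rw [isUnit_iff_ne_zero]
  intro h
  have := CFC.sqrt_mul_sqrt_self S hS.posSemidef.nonneg
  have hd : S.det = 0 := by
    rw [← this, Matrix.det_mul, h, mul_zero]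
  exact hS.det_pos.ne' hd

lemma partI {r : ℕ} (hr : 0 < r) (S1 S2 : Matrix (Fin r) (Fin r) ℝ)
    (h1 : S1.PosDef) (h2 : S2.PosDef)
    (hM : (CFC.sqrt S2 * S1⁻¹ * CFC.sqrt S2).IsHermitian) :
    frobSq (S1 - S2) / rhoMax S2 ^ 2 ≤ ∑ k, ((hM.eigenvalues k)⁻¹ - 1) ^ 2 ∧
      ∑ k, ((hM.eigenvalues k)⁻¹ - 1) ^ 2 ≤ frobSq (S1 - S2) / rhoMin S2 ^ 2 := by
  haveI : Nonempty (Fin r) := ⟨⟨0, hr⟩⟩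
  set Q : Matrix (Fin r) (Fin r) ℝ := CFC.sqrt S2 with hQdef
  have hQQ : Q * Q = S2 := CFC.sqrt_mul_sqrt_self S2 h2.posSemidef.nonneg
  have hQH : Q.IsHermitian := (Matrix.nonneg_iff_posSemidef.mp (CFC.sqrt_nonneg S2)).1
  have hQT : Qᵀ = Q := by rw [← conjT_eq_T]; exact hQH
  have hQdet : IsUnit Q.det := sqrt_det_unit h2
  have hQiT : Q⁻¹ᵀ = Q⁻¹ := by rw [Matrix.transpose_nonsing_inv, hQT]
  have hQQi : Q * Q⁻¹ = 1 := Matrix.mul_nonsing_inv Q hQdet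
  have hQiQ : Q⁻¹ * Q = 1 := Matrix.nonsing_inv_mul Q hQdet
  have hS1det : IsUnit S1.det := h1.det_pos.ne'.isUnit
  -- eigenvalues of S2
  set e := h2.1.eigenvalues with he
  have hrange : eigSet S2 = Set.range e := eigSet_eq S2 h2.1
  have hfin : (Set.range e).Finite := Set.finite_range e
  have hne : (Set.range e).Nonempty := Set.range_nonempty e
  have hminmem : rhoMin S2 ∈ Set.range e := by
    rw [rhoMin, hrange]; exact hne.csInf_mem hfin
  have hmaxmem : rhoMax S2 ∈ Set.range e := by
    rw [rhoMax, hrange]; exact hne.csSup_mem hfin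
  have hminpos : 0 < rhoMin S2 := by
    obtain ⟨i, hi⟩ := hminmem
    rw [← hi]; exact h2.eigenvalues_pos i
  have hmaxpos : 0 < rhoMax S2 := by
    obtain ⟨i, hi⟩ := hmaxmem
    rw [← hi]; exact h2.eigenvalues_pos i
  have hlow : ∀ i, rhoMin S2 ≤ e i := fun i => by
    rw [rhoMin, hrange]; exact csInf_le hfin.bddBelow ⟨i, rfl⟩
  have hhigh : ∀ i, e i ≤ rhoMax S2 := fun i => by
    rw [rhoMax, hrange]; exact le_csSup hfin.bddAbove ⟨i, rfl⟩
  have hepos : ∀ i, 0 < e i := fun i => h2.eigenvalues_pos i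
  -- quadratic bounds for S2⁻¹
  obtain ⟨V, hV⟩ : ∃ U : Matrix.unitaryGroup (Fin r) ℝ, S2 = conjU U (Matrix.diagonal e) :=
    ⟨_, spectral S2 h2.1⟩
  have hS2inv : S2⁻¹ = conjU V (Matrix.diagonal fun i => (e i)⁻¹) := by
    apply Matrix.inv_eq_right_inv
    rw [hV, conjU_mul, Matrix.diagonal_mul_diagonal]
    have : (fun i => e i * (e i)⁻¹) = fun _ => (1:ℝ) := by
      funext i; exact mul_inv_cancel₀ (hepos i).ne'
    rw [this, Matrix.diagonal_one, conjU_one]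
  set a := (rhoMax S2)⁻¹ with ha
  set b := (rhoMin S2)⁻¹ with hb
  have hquad : ∀ v : Fin r → ℝ, a * (v ⬝ᵥ v) ≤ v ⬝ᵥ (S2⁻¹ *ᵥ v) ∧
      v ⬝ᵥ (S2⁻¹ *ᵥ v) ≤ b * (v ⬝ᵥ v) := by
    intro v
    rw [hS2inv]
    refine quad_bounds V _ (fun i => ⟨?_, ?_⟩) v
    · exact inv_anti₀ (hepos i) (hhigh i)
    · exact inv_anti₀ hminpos (hlow i)
  -- S2⁻¹ = Q⁻¹ * Q⁻¹
  have hPQi : S2⁻¹ = Q⁻¹ * Q⁻¹ := by rw [← hQQ, Matrix.mul_inv_rev]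
  -- frobSq bound for left multiplication by Q⁻¹
  have hfb : ∀ X : Matrix (Fin r) (Fin r) ℝ,
      a * frobSq X ≤ frobSq (Q⁻¹ * X) ∧ frobSq (Q⁻¹ * X) ≤ b * frobSq X := by
    intro X
    have heq : frobSq (Q⁻¹ * X) = (Xᵀ * S2⁻¹ * X).trace := by
      rw [frobSq_eq_trace, Matrix.transpose_mul, hQiT, hPQi]
      rw [Matrix.mul_assoc, Matrix.mul_assoc, Matrix.mul_assoc]
    rw [heq]
    exact conj_frob_bound hquad X
  -- the matrix M and its eigenvalues
  set d := hM.eigenvalues with hd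
  obtain ⟨U, hU⟩ : ∃ U : Matrix.unitaryGroup (Fin r) ℝ,
      Q * S1⁻¹ * Q = conjU U (Matrix.diagonal d) := ⟨_, spectral _ hM⟩
  have hMpd : (Q * S1⁻¹ * Q).PosDef := posdef_conj h1.inv hQdet hQT
  have hdpos : ∀ k, 0 < d k := fun k => hMpd.eigenvalues_pos k
  have hMinv : (Q * S1⁻¹ * Q)⁻¹ = Q⁻¹ * S1 * Q⁻¹ := by
    apply Matrix.inv_eq_right_inv
    simp only [Matrix.mul_assoc]
    rw [Matrix.mul_nonsing_inv_cancel_left Q _ hQdet,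
      Matrix.nonsing_inv_mul_cancel_left S1 _ hS1det, hQQi]
  have hsubT : (S1 - S2)ᵀ = S1 - S2 := by
    rw [← conjT_eq_T]; exact h1.1.sub h2.1
  have hNT : (Q⁻¹ * (S1 - S2) * Q⁻¹)ᵀ = Q⁻¹ * (S1 - S2) * Q⁻¹ := by
    rw [Matrix.transpose_mul, Matrix.transpose_mul, hsubT, hQiT, Matrix.mul_assoc]
  have hN : Q⁻¹ * (S1 - S2) * Q⁻¹ = conjU U (Matrix.diagonal fun k => (d k)⁻¹ - 1) := by
    have h1' : Q⁻¹ * (S1 - S2) * Q⁻¹ = (Q * S1⁻¹ * Q)⁻¹ - 1 := by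
      rw [hMinv, Matrix.mul_sub, Matrix.sub_mul]
      congr 1
      rw [← hQQ, ← Matrix.mul_assoc, hQiQ, Matrix.one_mul, hQQi]
    have h2' : (Q * S1⁻¹ * Q)⁻¹ = conjU U (Matrix.diagonal fun k => (d k)⁻¹) := by
      rw [hU]; exact conjU_inv U d fun k => (hdpos k).ne'
    rw [h1', h2', ← conjU_one U, conjU_sub]
    congr 1
    rw [← Matrix.diagonal_one, Matrix.diagonal_sub]
  have hsum : ∑ k, ((d k)⁻¹ - 1) ^ 2 = frobSq (Q⁻¹ * (S1 - S2) * Q⁻¹) := by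
    rw [frobSq_eq_trace, hNT, hN, conjU_mul, Matrix.diagonal_mul_diagonal, conjU_trace,
      Matrix.trace_diagonal]
    exact Finset.sum_congr rfl fun k _ => by ring
  -- assemble
  set t := frobSq (S1 - S2) with ht
  set X1 := (S1 - S2) * Q⁻¹ with hX1
  have hX1T : frobSq X1 = frobSq (Q⁻¹ * (S1 - S2)) := by
    rw [← frobSq_transpose X1, hX1, Matrix.transpose_mul, hsubT, hQiT]
  have hNX : Q⁻¹ * (S1 - S2) * Q⁻¹ = Q⁻¹ * X1 := by rw [hX1, Matrix.mul_assoc]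
  have hta : 0 ≤ a := inv_nonneg.mpr hmaxpos.le
  have htb : 0 ≤ b := inv_nonneg.mpr hminpos.le
  constructor
  · have c1 : a * t ≤ frobSq X1 := by rw [hX1T]; exact (hfb (S1 - S2)).1
    have c2 : a * frobSq X1 ≤ frobSq (Q⁻¹ * X1) := (hfb X1).1
    have c3 : a * (a * t) ≤ frobSq (Q⁻¹ * X1) :=
      le_trans (mul_le_mul_of_nonneg_left c1 hta) c2
    have heq : t / rhoMax S2 ^ 2 = a * (a * t) := by
      rw [ha, div_eq_mul_inv, pow_two, mul_inv]; ring
    rw [hsum, hNX, heq]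
    exact c3
  · have c1 : frobSq X1 ≤ b * t := by rw [hX1T]; exact (hfb (S1 - S2)).2
    have c2 : frobSq (Q⁻¹ * X1) ≤ b * frobSq X1 := (hfb X1).2
    have c3 : frobSq (Q⁻¹ * X1) ≤ b * (b * t) :=
      le_trans c2 (mul_le_mul_of_nonneg_left c1 htb)
    have heq : t / rhoMin S2 ^ 2 = b * (b * t) := by
      rw [hb, div_eq_mul_inv, pow_two, mul_inv]; ring
    rw [hsum, hNX, heq]
    exact c3

lemma sqrt_prod {m : ℕ} (f : Fin m → ℝ) (h : ∀ i, 0 ≤ f i) :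
    Real.sqrt (∏ i, f i) = ∏ i, Real.sqrt (f i) := by
  have h1 : (∏ i, Real.sqrt (f i)) ^ 2 = ∏ i, f i := by
    rw [← Finset.prod_pow]
    exact Finset.prod_congr rfl fun i _ => Real.sq_sqrt (h i)
  rw [← h1, Real.sqrt_sq (Finset.prod_nonneg fun i _ => Real.sqrt_nonneg _)]

lemma key_numeric (d δ : ℝ) (hd : 0 < d) (hδ : 0 < δ) (hδ' : δ ≤ 1/4)
    (h : (1 - δ) ^ 2 < 2 * Real.sqrt d / (1 + d)) : |d - 1| < 30 * Real.sqrt δ := by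
  set t := Real.sqrt d with htdef
  have ht : 0 < t := Real.sqrt_pos.mpr hd
  have htd : t ^ 2 = d := Real.sq_sqrt hd.le
  have hd1 : 0 < 1 + d := by linarith
  have h' : (1 - δ) ^ 2 * (1 + d) < 2 * t := by
    calc (1 - δ) ^ 2 * (1 + d) < (2 * t / (1 + d)) * (1 + d) := by
          exact mul_lt_mul_of_pos_right h hd1
      _ = 2 * t := by field_simp
  have hc : (9:ℝ)/16 ≤ (1 - δ) ^ 2 := by nlinarith
  have hc1 : (1 - δ) ^ 2 ≤ 1 := by nlinarith
  have ht4 : t < 4 := by nlinarith [sq_nonneg (t - 4)]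
  have h3 : (t - 1) ^ 2 < 30 * δ := by nlinarith [sq_nonneg (t-1), sq_nonneg δ, mul_pos ht hδ]
  have h4 : |t - 1| < Real.sqrt (30 * δ) := by
    rw [← Real.sqrt_sq_eq_abs]
    exact Real.sqrt_lt_sqrt (sq_nonneg _) h3
  have h5 : |d - 1| = |t - 1| * (t + 1) := by
    rw [← htd]
    have : t ^ 2 - 1 = (t - 1) * (t + 1) := by ring
    rw [this, abs_mul, abs_of_pos (by linarith : (0:ℝ) < t + 1)]
  have h6 : |d - 1| < Real.sqrt (30 * δ) * 5 := by
    rw [h5]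
    exact mul_lt_mul'' h4 (by linarith) (abs_nonneg _) (by linarith)
  have h7 : Real.sqrt (30 * δ) * 5 ≤ 30 * Real.sqrt δ := by
    rw [Real.sqrt_mul (by norm_num : (0:ℝ) ≤ 30)]
    have h30 : Real.sqrt 30 ≤ 6 := by
      rw [show (6:ℝ) = Real.sqrt 36 by rw [show (36:ℝ) = 6^2 by norm_num, Real.sqrt_sq]; norm_num]
      exact Real.sqrt_le_sqrt (by norm_num)
    nlinarith [Real.sqrt_nonneg δ, Real.sqrt_nonneg (30:ℝ)]
  linarith


lemma partII {r : ℕ} (T1 T2 : Matrix (Fin r) (Fin r) ℝ) (g1 : T1.PosDef) (g2 : T2.PosDef)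
    (hM : (CFC.sqrt T2 * T1⁻¹ * CFC.sqrt T2).IsHermitian)
    (δ : ℝ) (hδ0 : 0 < δ) (hδ14 : δ ≤ 1/4)
    (hg : gsq T1 T2 < δ) (k : Fin r) : |hM.eigenvalues k - 1| < 30 * Real.sqrt δ := by
  set Q : Matrix (Fin r) (Fin r) ℝ := CFC.sqrt T2 with hQdef
  have hQQ : Q * Q = T2 := CFC.sqrt_mul_sqrt_self T2 g2.posSemidef.nonneg
  have hQH : Q.IsHermitian := (Matrix.nonneg_iff_posSemidef.mp (CFC.sqrt_nonneg T2)).1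
  have hQT : Qᵀ = Q := by rw [← conjT_eq_T]; exact hQH
  have hQdet : IsUnit Q.det := sqrt_det_unit g2
  have hQQi : Q * Q⁻¹ = 1 := Matrix.mul_nonsing_inv Q hQdet
  have hQiQ : Q⁻¹ * Q = 1 := Matrix.nonsing_inv_mul Q hQdet
  have hT1det : IsUnit T1.det := g1.det_pos.ne'.isUnit
  set d := hM.eigenvalues with hd
  obtain ⟨U, hU⟩ : ∃ U : Matrix.unitaryGroup (Fin r) ℝ,
      Q * T1⁻¹ * Q = conjU U (Matrix.diagonal d) := ⟨_, spectral _ hM⟩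
  have hMpd : (Q * T1⁻¹ * Q).PosDef := posdef_conj g1.inv hQdet hQT
  have hdpos : ∀ j, 0 < d j := fun j => hMpd.eigenvalues_pos j
  have hp1 : 0 < T1.det := g1.det_pos
  have hp2 : 0 < T2.det := g2.det_pos
  -- determinant of M
  have hdet1 : T2.det = T1.det * ∏ j, d j := by
    have e1 : (Q * T1⁻¹ * Q).det = Q.det * T1.det⁻¹ * Q.det := by
      rw [Matrix.det_mul, Matrix.det_mul, Matrix.det_nonsing_inv, Ring.inverse_eq_inv']
    have e2 : (Q * T1⁻¹ * Q).det = ∏ j, d j := by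
      rw [hU, conjU_det, Matrix.det_diagonal]
    have e3 : Q.det * Q.det = T2.det := by rw [← Matrix.det_mul, hQQ]
    have := e1.symm.trans e2
    field_simp at this ⊢
    nlinarith [this, e3]
  -- inverse of M
  have hMinv : (Q * T1⁻¹ * Q)⁻¹ = Q⁻¹ * T1 * Q⁻¹ := by
    apply Matrix.inv_eq_right_inv
    simp only [Matrix.mul_assoc]
    rw [Matrix.mul_nonsing_inv_cancel_left Q _ hQdet,
      Matrix.nonsing_inv_mul_cancel_left T1 _ hT1det, hQQi]
  have hT1eq : Q * (Q * T1⁻¹ * Q)⁻¹ * Q = T1 := by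
    rw [hMinv, ← Matrix.mul_assoc, ← Matrix.mul_assoc, hQQi, Matrix.one_mul,
      Matrix.mul_assoc, hQiQ, Matrix.mul_one]
  -- T1 + T2 as conjugation
  have hsum : T1 + T2 = Q * conjU U (Matrix.diagonal fun j => (d j)⁻¹ + 1) * Q := by
    have e4 : conjU U (Matrix.diagonal fun j => (d j)⁻¹ + 1) =
        (Q * T1⁻¹ * Q)⁻¹ + 1 := by
      have e5 : (Q * T1⁻¹ * Q)⁻¹ = conjU U (Matrix.diagonal fun j => (d j)⁻¹) := by
        rw [hU]; exact conjU_inv U d fun j => (hdpos j).ne'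
      rw [e5, ← conjU_one U, conjU_add]
      congr 1
      rw [← Matrix.diagonal_one, Matrix.diagonal_add]
    rw [e4, Matrix.mul_add, Matrix.add_mul, hT1eq, Matrix.mul_one, hQQ]
  -- determinant of midpoint
  have hdet2 : (((1 : ℝ) / 2) • (T1 + T2)).det = T2.det * ∏ j, (((d j)⁻¹ + 1) / 2) := by
    rw [Matrix.det_smul, hsum, Matrix.det_mul, Matrix.det_mul, conjU_det, Matrix.det_diagonal]
    have e3 : Q.det * Q.det = T2.det := by rw [← Matrix.det_mul, hQQ]
    have e6 : ∏ j, (((d j)⁻¹ + 1) / 2) = (∏ j, ((d j)⁻¹ + 1)) / 2 ^ r := by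
      rw [Finset.prod_div_distrib, Finset.prod_const, Finset.card_univ, Fintype.card_fin]
    rw [e6, ← e3, Fintype.card_fin, div_pow, one_pow]
    ring
  -- the ratio R
  set p1 := T1.det with hp1def
  set p2 := T2.det with hp2def
  set dm := (((1:ℝ)/2) • (T1 + T2)).det with hdmdef
  have hdm : 0 < dm := by
    rw [hdet2]
    refine mul_pos hp2 (Finset.prod_pos fun j _ => ?_)
    have := hdpos j
    positivity
  set R := p1 ^ ((1:ℝ)/4) * p2 ^ ((1:ℝ)/4) / dm ^ ((1:ℝ)/2) with hRdef
  have hgR : gsq T1 T2 = 1 - R := rfl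
  have hR : 1 - δ < R := by
    rw [hgR] at hg; linarith
  have hq1 : (p1 ^ ((1:ℝ)/4)) ^ 2 = Real.sqrt p1 := by
    rw [← Real.rpow_natCast (p1 ^ ((1:ℝ)/4)) 2, ← Real.rpow_mul hp1.le, Real.sqrt_eq_rpow]
    norm_num
  have hq2 : (p2 ^ ((1:ℝ)/4)) ^ 2 = Real.sqrt p2 := by
    rw [← Real.rpow_natCast (p2 ^ ((1:ℝ)/4)) 2, ← Real.rpow_mul hp2.le, Real.sqrt_eq_rpow]
    norm_num
  have hq3 : (dm ^ ((1:ℝ)/2)) ^ 2 = dm := by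
    rw [← Real.rpow_natCast (dm ^ ((1:ℝ)/2)) 2, ← Real.rpow_mul hdm.le]
    norm_num
  have hR2 : R ^ 2 = Real.sqrt p1 * Real.sqrt p2 / dm := by
    rw [hRdef, div_pow, mul_pow, hq1, hq2, hq3]
  have hR2' : R ^ 2 = ∏ j, (2 * Real.sqrt (d j) / (1 + d j)) := by
    have hsd : Real.sqrt p2 = Real.sqrt p1 * ∏ j, Real.sqrt (d j) := by
      rw [hdet1, Real.sqrt_mul hp1.le, sqrt_prod _ fun j => (hdpos j).le]
    rw [hR2, hsd, hdet2, hdet1]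
    rw [show Real.sqrt p1 * (Real.sqrt p1 * ∏ j, Real.sqrt (d j)) =
      p1 * ∏ j, Real.sqrt (d j) by rw [← mul_assoc, Real.mul_self_sqrt hp1.le]]
    have hpoint : ∏ j, (2 * Real.sqrt (d j) / (1 + d j)) =
        (∏ j, Real.sqrt (d j)) / ((∏ j, d j) * ∏ j, (((d j)⁻¹ + 1) / 2)) := by
      rw [← Finset.prod_mul_distrib, ← Finset.prod_div_distrib]
      refine Finset.prod_congr rfl fun j _ => ?_
      have hx := hdpos j
      have hden : d j * (((d j)⁻¹ + 1)/2) = (1 + d j)/2 := by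
        field_simp
      rw [hden, div_div_eq_mul_div, mul_comm]
    rw [hpoint, mul_assoc, mul_div_mul_left _ _ hp1.ne']
  have hfpos : ∀ j, 0 < 2 * Real.sqrt (d j) / (1 + d j) := fun j => by
    have h1 := hdpos j
    have h2 : 0 < Real.sqrt (d j) := Real.sqrt_pos.mpr h1
    positivity
  have hfle : ∀ j, 2 * Real.sqrt (d j) / (1 + d j) ≤ 1 := fun j => by
    have h1 := hdpos j
    have hs : Real.sqrt (d j) ^ 2 = d j := Real.sq_sqrt h1.le
    rw [div_le_one (by linarith)]
    nlinarith [sq_nonneg (Real.sqrt (d j) - 1)]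
  have hd2 : (1 - δ) ^ 2 < R ^ 2 := by
    apply pow_lt_pow_left₀ hR (by linarith)
    norm_num
  have hprod_le : R ^ 2 ≤ 2 * Real.sqrt (d k) / (1 + d k) := by
    rw [hR2']
    calc ∏ j, (2 * Real.sqrt (d j) / (1 + d j))
        = (2 * Real.sqrt (d k) / (1 + d k)) *
          ∏ j ∈ Finset.univ.erase k, (2 * Real.sqrt (d j) / (1 + d j)) :=
          (Finset.mul_prod_erase Finset.univ _ (Finset.mem_univ k)).symm
      _ ≤ (2 * Real.sqrt (d k) / (1 + d k)) * 1 := by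
          refine mul_le_mul_of_nonneg_left ?_ (hfpos k).le
          exact Finset.prod_le_one (fun j _ => (hfpos j).le) (fun j _ => hfle j)
      _ = 2 * Real.sqrt (d k) / (1 + d k) := mul_one _
  exact key_numeric (d k) δ (hdpos k) hδ0 hδ14 (lt_of_lt_of_le hd2 hprod_le)

/-- **Eigenvalue comparison lemma**: for positive definite `Σ₁, Σ₂` with
`d₁,…,d_r` the eigenvalues of `Σ₂^{1/2} Σ₁⁻¹ Σ₂^{1/2}`:
(i) `ρ_max(Σ₂)⁻² ‖Σ₁−Σ₂‖_F² ≤ ∑ₖ (dₖ⁻¹−1)² ≤ ρ_min(Σ₂)⁻² ‖Σ₁−Σ₂‖_F²`;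
(ii) for every `ε > 0` there is `δ > 0`, independent of `r, Σ₁, Σ₂`, such that
`g²(Σ₁,Σ₂) < δ` forces `max_k |dₖ − 1| < ε`. -/
theorem eigenvalue_comparison (r : ℕ) (S1 S2 : Matrix (Fin r) (Fin r) ℝ)
    (h1 : S1.PosDef) (h2 : S2.PosDef)
    (hM : (CFC.sqrt S2 * S1⁻¹ * CFC.sqrt S2).IsHermitian) :
    (frobSq (S1 - S2) / rhoMax S2 ^ 2 ≤ ∑ k, ((hM.eigenvalues k)⁻¹ - 1) ^ 2 ∧
      ∑ k, ((hM.eigenvalues k)⁻¹ - 1) ^ 2 ≤ frobSq (S1 - S2) / rhoMin S2 ^ 2) ∧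
    ∀ ε > 0, ∃ δ > 0, ∀ (r' : ℕ) (T1 T2 : Matrix (Fin r') (Fin r') ℝ)
      (g1 : T1.PosDef) (g2 : T2.PosDef)
      (hM' : (CFC.sqrt T2 * T1⁻¹ * CFC.sqrt T2).IsHermitian),
      gsq T1 T2 < δ → ∀ k, |hM'.eigenvalues k - 1| < ε := by
  constructor
  · rcases Nat.eq_zero_or_pos r with hr | hr
    · subst hr
      constructor <;> simp [frobSq]
    · exact partI hr S1 S2 h1 h2 hM
  · intro ε hε
    refine ⟨min (1/4) (ε^2/900), lt_min (by norm_num) (by positivity), ?_⟩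
    intro r' T1 T2 g1 g2 hM' hgs k
    have hδ0 : 0 < min (1/4 : ℝ) (ε^2/900) := lt_min (by norm_num) (by positivity)
    have hkey := partII T1 T2 g1 g2 hM' _ hδ0 (min_le_left _ _) hgs k
    have h30 : 30 * Real.sqrt (min (1/4 : ℝ) (ε^2/900)) ≤ ε := by
      have hδε : min (1/4 : ℝ) (ε^2/900) ≤ ε^2/900 := min_le_right _ _
      have hs1 : Real.sqrt (min (1/4 : ℝ) (ε^2/900)) ≤ Real.sqrt (ε^2/900) :=
        Real.sqrt_le_sqrt hδε
      have hs2 : Real.sqrt (ε^2/900) = ε/30 := by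
        rw [show ε^2/900 = (ε/30)^2 by ring, Real.sqrt_sq (by positivity)]
      rw [hs2] at hs1
      linarith
    linarith
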